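/- Let g: C' → C be a morphism in comon in a twisted homotopical category. If the Borel kernel C ∖̃ C' admits a comonoid structure such that ι_g: C ∖̃ C' → C' is a comonoid morphism, and there is a weak equivalence of Ω C'-modules ι̃: ΩC → C' ∖̃ (C ∖̃ C') such that ι̃ ∘ Ωg = ∂_{ι_g} and ι_{ι_g} ∘ ι̃ = ∂_g, then g is h-conormal with conormality structure Ω ι_g: Ω(C ∖̃ C') → ΩC'. -/

import Mathlib

/-!
Statement 0 (Lemma 1.10(1) of Farjoun–Hess, "Normal and conormal maps in homotopy theory").

In a twisted homotopical category, for every morphism `f : A ⟶ A'` of monoids there is a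
weak equivalence of biprincipal bundles from
`(Ω B̄A' → B̄A' ∖̃ B̄A → B̄A)` to `(A' → A' ⫽ A → B̄A)`:
the left vertical map is the counit `v_{A'} : Ω B̄ A' → A'` (a weak equivalence), the middle
vertical map `B̄A' ∖̃ B̄A → A' ⫽ A` is a weak equivalence, and the right vertical map is the
identity of `B̄A`.

We model a twisted homotopical category as a homotopical category `(M, w)` (weak equivalences
contain identities and satisfy two-out-of-six) together with full subcategories `Mon` of
augmented monoids and `Comon` of coaugmented comonoids (given abstractly, with underlying-object
functors into `M`), a cobar/bar adjunction `Ω ⊣ B̄`, and, for every classifying (comonoid) map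
`g : C ⟶ B̄ A`, the total object `Tot g` of the corresponding classifiable biprincipal bundle
`A ⟶ Tot g ⟶ C`, with pushforwards along monoid maps and pullbacks along comonoid maps.
The classifying bundle of `A` is `ζ(A) = Tot (𝟙 (B̄ A))`, the classifying bundle of `C` is
`ξ(C) = Tot (u_C)` where `u` is the unit of the adjunction.  The Borel quotient of
`f : A ⟶ A'` is the total object of the bundle classified by `B̄ f`, and the Borel kernel
of `g : C' ⟶ C` is the total object of the bundle classified by `g ≫ u_C`.
-/

open CategoryTheory

universe v v₁ v₂ u u₁ u₂

/-- A twisted homotopical category (interface form). -/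
structure TwistedHomotopicalCategory (M : Type u) [Category.{v} M]
    (Mon : Type u₁) [Category.{v₁} Mon] (Comon : Type u₂) [Category.{v₂} Comon] where
  /-- the weak equivalences of `M` -/
  w : MorphismProperty M
  /-- weak equivalences contain all identities -/
  w_id : ∀ X : M, w (𝟙 X)
  /-- the two-out-of-six property -/
  w_two_out_of_six : ∀ {X Y Z T : M} (r : X ⟶ Y) (s : Y ⟶ Z) (t : Z ⟶ T),
    w (r ≫ s) → w (s ≫ t) → w r ∧ w s ∧ w t ∧ w (r ≫ s ≫ t)
  /-- underlying object in `M` of a monoid -/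
  monU : Mon ⥤ M
  /-- underlying object in `M` of a comonoid -/
  comonU : Comon ⥤ M
  /-- the cobar construction -/
  Om : Comon ⥤ Mon
  /-- the bar construction -/
  Bar : Mon ⥤ Comon
  /-- the cobar/bar adjunction -/
  adj : Om ⊣ Bar
  /-- the monoidal unit -/
  unit : M
  /-- the unit of an (augmented) monoid -/
  monUnit : ∀ A : Mon, unit ⟶ monU.obj A
  /-- the augmentation of an (augmented) monoid -/
  monAug : ∀ A : Mon, monU.obj A ⟶ unit
  /-- the counit of a (coaugmented) comonoid -/
  comonCounit : ∀ C : Comon, comonU.obj C ⟶ unit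
  /-- the coaugmentation of a (coaugmented) comonoid -/
  comonCoaug : ∀ C : Comon, unit ⟶ comonU.obj C
  /-- total object of the classifiable biprincipal bundle with fibre monoid `A`, base
  comonoid `C`, classified by `g : C ⟶ B̄ A`. -/
  Tot : ∀ {C : Comon} {A : Mon}, (C ⟶ Bar.obj A) → M
  /-- inclusion of the fibre monoid into the total object (a map of right `A`-modules) -/
  totI : ∀ {C : Comon} {A : Mon} (g : C ⟶ Bar.obj A), monU.obj A ⟶ Tot g
  /-- projection of the total object onto the base (a map of left `C`-comodules) -/
  totP : ∀ {C : Comon} {A : Mon} (g : C ⟶ Bar.obj A), Tot g ⟶ comonU.obj C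
  /-- pushforward of a classifiable biprincipal bundle along a monoid map:
  `f_* (Tot g) = Tot (g ≫ B̄ f)`, with its canonical comparison map. -/
  push : ∀ {C : Comon} {A A' : Mon} (g : C ⟶ Bar.obj A) (f : A ⟶ A'),
    Tot g ⟶ Tot (g ≫ Bar.map f)
  push_i : ∀ {C : Comon} {A A' : Mon} (g : C ⟶ Bar.obj A) (f : A ⟶ A'),
    totI g ≫ push g f = monU.map f ≫ totI (g ≫ Bar.map f)
  push_p : ∀ {C : Comon} {A A' : Mon} (g : C ⟶ Bar.obj A) (f : A ⟶ A'),
    push g f ≫ totP (g ≫ Bar.map f) = totP g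
  /-- pullback of a classifiable biprincipal bundle along a comonoid map:
  `h^* (Tot g) = Tot (h ≫ g)`, with its canonical comparison map. -/
  pull : ∀ {C' C : Comon} {A : Mon} (h : C' ⟶ C) (g : C ⟶ Bar.obj A),
    Tot (h ≫ g) ⟶ Tot g
  pull_i : ∀ {C' C : Comon} {A : Mon} (h : C' ⟶ C) (g : C ⟶ Bar.obj A),
    totI (h ≫ g) ≫ pull h g = totI g
  pull_p : ∀ {C' C : Comon} {A : Mon} (h : C' ⟶ C) (g : C ⟶ Bar.obj A),
    pull h g ≫ totP g = totP (h ≫ g) ≫ comonU.map h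
  /-- axiom (1): the unit of the cobar/bar adjunction is a weak equivalence -/
  unit_w : ∀ C : Comon, w (comonU.map (adj.unit.app C))
  /-- axiom (1): the counit of the cobar/bar adjunction is a weak equivalence -/
  counit_w : ∀ A : Mon, w (monU.map (adj.counit.app A))
  /-- axiom (2): `Ω` is homotopical -/
  Om_w : ∀ {C C' : Comon} (g : C ⟶ C'), w (comonU.map g) → w (monU.map (Om.map g))
  /-- axiom (2): `B̄` is homotopical -/
  Bar_w : ∀ {A A' : Mon} (f : A ⟶ A'), w (monU.map f) → w (comonU.map (Bar.map f))
  /-- axiom (3): `𝓔 A ⟶ B̄ A ⟶ I` is a weak equivalence, where `𝓔 A = Tot (𝟙 (B̄ A))` -/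
  E_acyclic : ∀ A : Mon, w (totP (𝟙 (Bar.obj A)) ≫ comonCounit (Bar.obj A))
  /-- axiom (4): `I ⟶ Ω C ⟶ 𝓟 C` is a weak equivalence, where `𝓟 C = Tot (u_C)` -/
  P_acyclic : ∀ C : Comon, w (monUnit (Om.obj C) ≫ totI (adj.unit.app C))
  /-- axiom (5): pushforward of a classifiable biprincipal bundle along a weak
  equivalence of monoids is a weak equivalence of bundles -/
  push_w : ∀ {C : Comon} {A A' : Mon} (g : C ⟶ Bar.obj A) (f : A ⟶ A'),
    w (monU.map f) → w (push g f)
  /-- axiom (6): pullback of a classifiable biprincipal bundle along a weak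
  equivalence of comonoids is a weak equivalence of bundles -/
  pull_w : ∀ {C' C : Comon} {A : Mon} (h : C' ⟶ C) (g : C ⟶ Bar.obj A),
    w (comonU.map h) → w (pull h g)

namespace TwistedHomotopicalCategory

variable {M : Type u} [Category.{v} M] {Mon : Type u₁} [Category.{v₁} Mon]
  {Comon : Type u₂} [Category.{v₂} Comon]
  (T : TwistedHomotopicalCategory M Mon Comon)

/-- The Borel (homotopy) quotient `A' ⫽ A` of a monoid map `f : A ⟶ A'`: the total object of
the biprincipal bundle classified by `B̄ f`. -/
def borelQuot {A A' : Mon} (f : A ⟶ A') : M := T.Tot (T.Bar.map f)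

/-- `π_f : A' ⟶ A' ⫽ A` -/
def πmap {A A' : Mon} (f : A ⟶ A') : T.monU.obj A' ⟶ T.borelQuot f := T.totI (T.Bar.map f)

/-- `δ_f : A' ⫽ A ⟶ B̄ A` -/
def δmap {A A' : Mon} (f : A ⟶ A') : T.borelQuot f ⟶ T.comonU.obj (T.Bar.obj A) :=
  T.totP (T.Bar.map f)

/-- The Borel (homotopy) kernel `C ∖̃ C'` of a comonoid map `g : C' ⟶ C`: the total object of
the biprincipal bundle classified by `g ≫ u_C`. -/
def borelKer {C' C : Comon} (g : C' ⟶ C) : M := T.Tot (g ≫ T.adj.unit.app C)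

/-- `∂_g : Ω C ⟶ C ∖̃ C'` -/
def delMap {C' C : Comon} (g : C' ⟶ C) : T.monU.obj (T.Om.obj C) ⟶ T.borelKer g :=
  T.totI (g ≫ T.adj.unit.app C)

/-- `ι_g : C ∖̃ C' ⟶ C'` -/
def ιmap {C' C : Comon} (g : C' ⟶ C) : T.borelKer g ⟶ T.comonU.obj C' :=
  T.totP (g ≫ T.adj.unit.app C)

end TwistedHomotopicalCategory

open TwistedHomotopicalCategory

/-! ### Extended bundles and h-normality -/

namespace TwistedHomotopicalCategory

variable {M : Type u} [Category.{v} M] {Mon : Type u₁} [Category.{v₁} Mon]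
  {Comon : Type u₂} [Category.{v₂} Comon]
  (T : TwistedHomotopicalCategory M Mon Comon)

/-- An extended bundle `A → Mo → N → C`: `A` is a monoid, `Mo` a right `A`-module with the
first map `A`-linear, `C` a comonoid, `N` a left `C`-comodule with the last map a comodule
map.  (The module and comodule structures are implicit in this interface.) -/
structure ExtBundle where
  A : Mon
  Mo : M
  N : M
  C : Comon
  j : T.monU.obj A ⟶ Mo
  d : Mo ⟶ N
  p : N ⟶ T.comonU.obj C

/-- An elementary equivalence of extended bundles: a morphism of extended bundles all of whose
components are weak equivalences. -/
def ElemEquiv (E F : T.ExtBundle) : Prop :=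
  ∃ (α : E.A ⟶ F.A) (μ : E.Mo ⟶ F.Mo) (ν : E.N ⟶ F.N) (β : E.C ⟶ F.C),
    T.w (T.monU.map α) ∧ T.w μ ∧ T.w ν ∧ T.w (T.comonU.map β) ∧
    E.j ≫ μ = T.monU.map α ≫ F.j ∧
    E.d ≫ ν = μ ≫ F.d ∧
    E.p ≫ T.comonU.map β = ν ≫ F.p

/-- Equivalence of extended bundles: a zigzag of elementary equivalences. -/
def BundleEquiv : T.ExtBundle → T.ExtBundle → Prop :=
  Relation.EqvGen T.ElemEquiv

/-- The truncated Nomura–Puppe sequence `τ(f) = (A' → A'⫽A → B̄A → B̄A')` of a monoid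
morphism `f : A ⟶ A'`. -/
def tau {A A' : Mon} (f : A ⟶ A') : T.ExtBundle where
  A := A'
  Mo := T.borelQuot f
  N := T.comonU.obj (T.Bar.obj A)
  C := T.Bar.obj A'
  j := T.πmap f
  d := T.δmap f
  p := T.comonU.map (T.Bar.map f)

/-- The truncated dual Nomura–Puppe sequence `θ(g) = (ΩC' → ΩC → C ∖̃ C' → C')` of a comonoid
morphism `g : C' ⟶ C`. -/
def theta {C' C : Comon} (g : C' ⟶ C) : T.ExtBundle where
  A := T.Om.obj C'
  Mo := T.monU.obj (T.Om.obj C)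
  N := T.borelKer g
  C := C'
  j := T.monU.map (T.Om.map g)
  d := T.delMap g
  p := T.ιmap g

/-- The pair `(f, g)` is normal if `τ(f)` and `θ(g)` are equivalent extended bundles;
then `f` is h-normal with normality structure `g`, and `g` is h-conormal with conormality
structure `f`. -/
def IsNormalPair {A A' : Mon} (f : A ⟶ A') {C' C : Comon} (g : C' ⟶ C) : Prop :=
  T.BundleEquiv (T.tau f) (T.theta g)

/-- `f` is h-normal if there is a comonoid map `g` such that `(f, g)` is a normal pair. -/
def IsHNormal {A A' : Mon} (f : A ⟶ A') : Prop :=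
  ∃ (C' C : Comon) (g : C' ⟶ C), T.IsNormalPair f g

/-- `g` is h-conormal if there is a monoid map `f` such that `(f, g)` is a normal pair. -/
def IsHConormal {C' C : Comon} (g : C' ⟶ C) : Prop :=
  ∃ (A A' : Mon) (f : A ⟶ A'), T.IsNormalPair f g

end TwistedHomotopicalCategory

namespace TwistedHomotopicalCategory

variable {M : Type u} [Category.{v} M] {Mon : Type u₁} [Category.{v₁} Mon]
  {Comon : Type u₂} [Category.{v₂} Comon]
  (T : TwistedHomotopicalCategory M Mon Comon)

lemma totI_eqToHom {C : Comon} {A : Mon} {q q' : C ⟶ T.Bar.obj A} (h : q = q')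
    (hT : T.Tot q = T.Tot q') : T.totI q ≫ eqToHom hT = T.totI q' := by
  subst h; simp

lemma totP_eqToHom {C : Comon} {A : Mon} {q q' : C ⟶ T.Bar.obj A} (h : q = q')
    (hT : T.Tot q = T.Tot q') : eqToHom hT ≫ T.totP q' = T.totP q := by
  subst h; simp

lemma w_eqToHom_comp {X Y Z : M} (h : X = Y) (s : Y ⟶ Z) (hs : T.w s) :
    T.w (eqToHom h ≫ s) := by
  subst h; simp only [eqToHom_refl, Category.id_comp]; exact hs

lemma w_iso_inv {X Y : M} (φ : X ≅ Y) : T.w φ.inv := by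
  have h1 : T.w (φ.inv ≫ φ.hom) := by rw [Iso.inv_hom_id]; exact T.w_id _
  have h2 : T.w (φ.hom ≫ φ.inv) := by rw [Iso.hom_inv_id]; exact T.w_id _
  exact (T.w_two_out_of_six φ.inv φ.hom φ.inv h1 h2).1

end TwistedHomotopicalCategory

/-- (Lemma 2.8 of the paper.)  Let `g : C' ⟶ C` be a morphism in `comon`.
Suppose the Borel kernel `C ∖̃ C'` admits a comonoid structure (a comonoid `K` whose
underlying object is isomorphic to `C ∖̃ C'`) with respect to which
`ι_g : C ∖̃ C' ⟶ C'` is a comonoid morphism `i : K ⟶ C'`, and suppose there is a weak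
equivalence (of right `Ω C'`-modules) `ι̃ : Ω C ⟶ C' ∖̃ (C ∖̃ C')` such that
`ι̃ ∘ Ω g = ∂_{ι_g}` and `ι_{ι_g} ∘ ι̃ = ∂_g`.  Then `g` is h-conormal with conormality
structure `Ω ι_g : Ω (C ∖̃ C') ⟶ Ω C'`. -/
theorem normal_conormal_stmt7
    {M : Type u} [Category.{v} M] {Mon : Type u₁} [Category.{v₁} Mon]
    {Comon : Type u₂} [Category.{v₂} Comon]
    (T : TwistedHomotopicalCategory M Mon Comon)
    {C' C : Comon} (g : C' ⟶ C)
    -- a comonoid structure on `C ∖̃ C'` …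
    (K : Comon) (φ : T.comonU.obj K ≅ T.borelKer g)
    -- … with respect to which `ι_g` is a comonoid morphism
    (i : K ⟶ C') (hi : T.comonU.map i = φ.hom ≫ T.ιmap g)
    -- a weak equivalence `ι̃ : Ω C ⟶ C' ∖̃ (C ∖̃ C')` …
    (ιt : T.monU.obj (T.Om.obj C) ⟶ T.borelKer i) (hιt : T.w ιt)
    -- … such that `ι̃ ∘ Ω g = ∂_{ι_g}` and `ι_{ι_g} ∘ ι̃ = ∂_g`
    (sq₁ : T.monU.map (T.Om.map g) ≫ ιt = T.delMap i)
    (sq₂ : ιt ≫ T.ιmap i ≫ φ.hom = T.delMap g) :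
    T.IsNormalPair (T.Om.map i) g := by
  have key : i ≫ T.adj.unit.app C' = T.adj.unit.app K ≫ T.Bar.map (T.Om.map i) := by
    exact T.adj.unit.naturality i
  have hT : T.borelKer i = T.Tot (T.adj.unit.app K ≫ T.Bar.map (T.Om.map i)) := by
    unfold TwistedHomotopicalCategory.borelKer; rw [key]
  -- intermediate bundle
  let G : T.ExtBundle :=
    { A := T.Om.obj C', Mo := T.borelKer i, N := T.comonU.obj K, C := C',
      j := T.delMap i, d := T.ιmap i, p := T.comonU.map i }
  have e₁ : T.ElemEquiv (T.theta g) G := by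
    refine ⟨𝟙 _, ιt, φ.inv, 𝟙 _, ?_, hιt, T.w_iso_inv φ, ?_, ?_, ?_, ?_⟩
    · exact (congrArg (fun f => T.w f) (T.monU.map_id _)).mpr (T.w_id _)
    · exact (congrArg (fun f => T.w f) (T.comonU.map_id _)).mpr (T.w_id _)
    · show T.monU.map (T.Om.map g) ≫ ιt = T.monU.map (𝟙 _) ≫ T.delMap i
      rw [sq₁, CategoryTheory.Functor.map_id, Category.id_comp]
    · show T.delMap g ≫ φ.inv = ιt ≫ T.ιmap i
      rw [← sq₂]; simp
    · show T.ιmap g ≫ T.comonU.map (𝟙 _) = φ.inv ≫ T.comonU.map i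
      rw [hi, CategoryTheory.Functor.map_id, Category.comp_id, Iso.inv_hom_id_assoc]
  have e₂ : T.ElemEquiv G (T.tau (T.Om.map i)) := by
    refine ⟨𝟙 _, eqToHom hT ≫ T.pull (T.adj.unit.app K) (T.Bar.map (T.Om.map i)),
      T.comonU.map (T.adj.unit.app K), T.adj.unit.app C', ?_, ?_, ?_, ?_, ?_, ?_, ?_⟩
    · exact (congrArg (fun f => T.w f) (T.monU.map_id _)).mpr (T.w_id _)
    · exact T.w_eqToHom_comp hT _ (T.pull_w _ _ (T.unit_w K))
    · exact T.unit_w K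
    · exact T.unit_w C'
    · show T.delMap i ≫ eqToHom hT ≫ T.pull _ _ = T.monU.map (𝟙 _) ≫ T.πmap (T.Om.map i)
      rw [CategoryTheory.Functor.map_id, Category.id_comp]
      show T.totI (i ≫ T.adj.unit.app C') ≫ eqToHom hT ≫ T.pull _ _ = _
      rw [← Category.assoc, T.totI_eqToHom key hT, T.pull_i]
      rfl
    · show T.ιmap i ≫ T.comonU.map (T.adj.unit.app K)
        = (eqToHom hT ≫ T.pull _ _) ≫ T.δmap (T.Om.map i)
      show _ = (eqToHom hT ≫ T.pull _ _) ≫ T.totP (T.Bar.map (T.Om.map i))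
      rw [Category.assoc, T.pull_p, ← Category.assoc]
      congr 1; exact (T.totP_eqToHom key hT).symm
    · show T.comonU.map i ≫ T.comonU.map (T.adj.unit.app C')
        = T.comonU.map (T.adj.unit.app K) ≫ T.comonU.map (T.Bar.map (T.Om.map i))
      rw [← CategoryTheory.Functor.map_comp, ← CategoryTheory.Functor.map_comp, key]
  exact Relation.EqvGen.trans _ _ _
    (Relation.EqvGen.symm _ _ (Relation.EqvGen.rel _ _ e₂))
    (Relation.EqvGen.symm _ _ (Relation.EqvGen.rel _ _ e₁))
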